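/- Let ℂ[X,Y,Z] be the polynomial ring in three variables over ℂ and let J be the principal ideal generated by XY − (XY² − 1)Z. In the quotient ring Q = ℂ[X,Y,Z]/J, the residue class of XY² − 1 is a unit, with inverse the residue class of YZ − 1. Moreover, there is a ℂ-algebra isomorphism from Q to the localization of the polynomial ring ℂ[X,Y] away from the element w = XY² − 1, sending the classes of X and Y to X and Y, and the class of Z to XY·w⁻¹. -/

import Mathlib

open MvPolynomial

/-- The ideal `(XY − (XY² − 1)Z)` of `ℂ[X,Y,Z]`. -/
noncomputable def chartIdeal' : Ideal (MvPolynomial (Fin 3) ℂ) :=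
  Ideal.span {X 0 * X 1 - (X 0 * (X 1) ^ 2 - 1) * X 2}

/-- The element `w = XY² − 1` of `ℂ[X,Y]`. -/
noncomputable def wElt : MvPolynomial (Fin 2) ℂ := X 0 * (X 1) ^ 2 - 1

noncomputable def fwd : MvPolynomial (Fin 3) ℂ →ₐ[ℂ] Localization.Away wElt :=
  aeval ![algebraMap (MvPolynomial (Fin 2) ℂ) (Localization.Away wElt) (X 0),
    algebraMap (MvPolynomial (Fin 2) ℂ) (Localization.Away wElt) (X 1),
    algebraMap (MvPolynomial (Fin 2) ℂ) (Localization.Away wElt) (X 0 * X 1) *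
      IsLocalization.Away.invSelf (S := Localization.Away wElt) wElt]

lemma fwd_gen : fwd (X 0 * X 1 - (X 0 * (X 1) ^ 2 - 1) * X 2) = 0 := by
  simp only [fwd, map_sub, map_mul, map_one, map_pow, aeval_X, Matrix.cons_val_zero,
    Matrix.cons_val_one, Matrix.head_cons, Matrix.cons_val_two, Matrix.tail_cons]
  have h : (algebraMap (MvPolynomial (Fin 2) ℂ) (Localization.Away wElt)) (X 0) *
      (algebraMap (MvPolynomial (Fin 2) ℂ) (Localization.Away wElt)) (X 1) ^ 2 - 1 =
      algebraMap (MvPolynomial (Fin 2) ℂ) (Localization.Away wElt) wElt := by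
    show _ = algebraMap (MvPolynomial (Fin 2) ℂ) (Localization.Away wElt) (X 0 * X 1 ^ 2 - 1)
    simp only [map_sub, map_mul, map_pow, map_one]
  rw [h]
  have h2 := IsLocalization.Away.mul_invSelf (S := Localization.Away wElt) wElt
  rw [show ∀ a b c : Localization.Away wElt, a * (b * c) = b * (a * c) from fun a b c => by ring,
    h2, mul_one, sub_self]

lemma mem1 : (X 0 * (X 1 : MvPolynomial (Fin 3) ℂ) ^ 2 - 1) * (X 1 * X 2 - 1) - 1 ∈ chartIdeal' := by
  rw [chartIdeal', Ideal.mem_span_singleton]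
  exact ⟨-X 1, by ring⟩

noncomputable def bwd0 : MvPolynomial (Fin 2) ℂ →ₐ[ℂ] (MvPolynomial (Fin 3) ℂ ⧸ chartIdeal') :=
  aeval ![Ideal.Quotient.mk chartIdeal' (X 0), Ideal.Quotient.mk chartIdeal' (X 1)]

lemma bwd0_w : bwd0 wElt * Ideal.Quotient.mk chartIdeal' (X 1 * X 2 - 1) = 1 := by
  have : bwd0 wElt = Ideal.Quotient.mk chartIdeal' (X 0 * (X 1) ^ 2 - 1) := by
    simp [bwd0, wElt]
  rw [this, ← map_mul, ← map_one (Ideal.Quotient.mk chartIdeal'), Ideal.Quotient.mk_eq_mk_iff_sub_mem]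
  exact mem1

lemma bwd0_w_unit : IsUnit (bwd0.toRingHom wElt) :=
  isUnit_iff_exists_inv.mpr ⟨_, bwd0_w⟩

noncomputable def bwd : Localization.Away wElt →+* (MvPolynomial (Fin 3) ℂ ⧸ chartIdeal') :=
  IsLocalization.Away.lift wElt bwd0_w_unit

noncomputable def fwdQ : (MvPolynomial (Fin 3) ℂ ⧸ chartIdeal') →ₐ[ℂ] Localization.Away wElt :=
  Ideal.Quotient.liftₐ chartIdeal' fwd (by
    intro a ha
    rw [chartIdeal', Ideal.mem_span_singleton] at ha
    obtain ⟨c, rfl⟩ := ha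
    rw [map_mul, fwd_gen, zero_mul])

lemma fwdQ_mk (a) : fwdQ (Ideal.Quotient.mk chartIdeal' a) = fwd a := rfl

lemma fwd_bwd : (fwdQ.toRingHom).comp bwd = RingHom.id _ := by
  apply IsLocalization.ringHom_ext (Submonoid.powers wElt)
  rw [RingHom.comp_assoc]
  unfold bwd
  rw [IsLocalization.Away.lift_comp]
  apply MvPolynomial.ringHom_ext
  · intro c
    simp only [RingHom.comp_apply, RingHom.id_apply]
    have h1 : bwd0.toRingHom (C c) = Ideal.Quotient.mk chartIdeal' (C c) := by
      simp [bwd0, MvPolynomial.algebraMap_eq, Ideal.Quotient.mk_algebraMap,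
        IsScalarTower.algebraMap_apply ℂ (MvPolynomial (Fin 3) ℂ)
          (MvPolynomial (Fin 3) ℂ ⧸ chartIdeal')]
    rw [h1]
    have h2 : fwdQ (Ideal.Quotient.mk chartIdeal' (C c)) = fwd (C c) := by
      rfl
    rw [show fwdQ.toRingHom (Ideal.Quotient.mk chartIdeal' (C c)) = fwd (C c) from h2]
    simp [fwd, IsScalarTower.algebraMap_apply ℂ (MvPolynomial (Fin 2) ℂ)
      (Localization.Away wElt), MvPolynomial.algebraMap_eq]
  · intro i
    fin_cases i <;> simp [bwd0, fwdQ_mk, fwd]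

lemma bwd_invSelf :
    bwd (IsLocalization.Away.invSelf (S := Localization.Away wElt) wElt) =
      Ideal.Quotient.mk chartIdeal' (X 1 * X 2 - 1) := by
  have h1 : bwd0 wElt * bwd (IsLocalization.Away.invSelf (S := Localization.Away wElt) wElt)
      = 1 := by
    have := IsLocalization.Away.lift_eq (S := Localization.Away wElt) (g := bwd0.toRingHom) wElt bwd0_w_unit wElt
    calc bwd0 wElt * bwd (IsLocalization.Away.invSelf (S := Localization.Away wElt) wElt)
        = bwd (algebraMap _ _ wElt) *
          bwd (IsLocalization.Away.invSelf (S := Localization.Away wElt) wElt) := by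
          rw [show bwd (algebraMap _ _ wElt) = bwd0 wElt from this]
      _ = bwd (algebraMap _ _ wElt * IsLocalization.Away.invSelf (S := Localization.Away wElt) wElt) := (map_mul _ _ _).symm
      _ = 1 := by rw [IsLocalization.Away.mul_invSelf, map_one]
  calc bwd (IsLocalization.Away.invSelf (S := Localization.Away wElt) wElt)
      = (bwd0 wElt * Ideal.Quotient.mk chartIdeal' (X 1 * X 2 - 1)) *
        bwd (IsLocalization.Away.invSelf (S := Localization.Away wElt) wElt) := by
        rw [bwd0_w, one_mul]
    _ = Ideal.Quotient.mk chartIdeal' (X 1 * X 2 - 1) *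
        (bwd0 wElt * bwd (IsLocalization.Away.invSelf (S := Localization.Away wElt) wElt)) := by
        ring
    _ = _ := by rw [h1, mul_one]

lemma bwd_fwd : bwd.comp fwdQ.toRingHom = RingHom.id _ := by
  apply Ideal.Quotient.ringHom_ext
  apply MvPolynomial.ringHom_ext
  · intro c
    have h2 : fwdQ (Ideal.Quotient.mk chartIdeal' (C c)) = fwd (C c) := by rfl
    simp only [RingHom.comp_apply, RingHom.id_apply]
    rw [show fwdQ.toRingHom (Ideal.Quotient.mk chartIdeal' (C c)) = fwd (C c) from h2]
    have h3 : fwd (C c) = algebraMap (MvPolynomial (Fin 2) ℂ) (Localization.Away wElt) (C c) := by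
      simp [fwd, IsScalarTower.algebraMap_apply ℂ (MvPolynomial (Fin 2) ℂ)
        (Localization.Away wElt), MvPolynomial.algebraMap_eq]
    rw [h3]
    have h4 : bwd (algebraMap (MvPolynomial (Fin 2) ℂ) (Localization.Away wElt) (C c)) =
        bwd0 (C c) := IsLocalization.Away.lift_eq _ _ _
    rw [h4]
    simp [bwd0, MvPolynomial.algebraMap_eq, IsScalarTower.algebraMap_apply ℂ
      (MvPolynomial (Fin 3) ℂ) (MvPolynomial (Fin 3) ℂ ⧸ chartIdeal')]
  · intro i
    have key : ∀ p : MvPolynomial (Fin 2) ℂ,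
        bwd (algebraMap (MvPolynomial (Fin 2) ℂ) (Localization.Away wElt) p) = bwd0 p :=
      fun p => IsLocalization.Away.lift_eq _ _ _
    fin_cases i
    · show bwd (fwdQ.toRingHom (Ideal.Quotient.mk chartIdeal' (X 0))) =
        Ideal.Quotient.mk chartIdeal' (X 0)
      rw [show fwdQ.toRingHom (Ideal.Quotient.mk chartIdeal' (X 0)) = fwd (X 0) from by
        rfl]
      simp only [fwd, aeval_X, Matrix.cons_val_zero]
      rw [key]; simp [bwd0]
    · show bwd (fwdQ.toRingHom (Ideal.Quotient.mk chartIdeal' (X 1))) =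
        Ideal.Quotient.mk chartIdeal' (X 1)
      rw [show fwdQ.toRingHom (Ideal.Quotient.mk chartIdeal' (X 1)) = fwd (X 1) from by
        rfl]
      simp only [fwd, aeval_X, Matrix.cons_val_one, Matrix.head_cons, Matrix.cons_val_zero]
      rw [key]; simp [bwd0]
    · show bwd (fwdQ.toRingHom (Ideal.Quotient.mk chartIdeal' (X 2))) =
        Ideal.Quotient.mk chartIdeal' (X 2)
      rw [show fwdQ.toRingHom (Ideal.Quotient.mk chartIdeal' (X 2)) = fwd (X 2) from by
        rfl]
      simp only [fwd, aeval_X, Matrix.cons_val_two, Matrix.tail_cons, Matrix.head_cons]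
      rw [map_mul, key, bwd_invSelf]
      have h5 : bwd0 (X 0 * X 1) = Ideal.Quotient.mk chartIdeal' (X 0 * X 1) := by
        simp [bwd0]
      rw [h5, ← map_mul, Ideal.Quotient.mk_eq_mk_iff_sub_mem]
      rw [chartIdeal', Ideal.mem_span_singleton]
      exact ⟨-1, by ring⟩

noncomputable def theEquiv : (MvPolynomial (Fin 3) ℂ ⧸ chartIdeal') ≃ₐ[ℂ] Localization.Away wElt :=
  AlgEquiv.ofRingEquiv (f := RingEquiv.ofRingHom fwdQ.toRingHom bwd fwd_bwd bwd_fwd)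
    (fun c => fwdQ.commutes c)

lemma theEquiv_apply (q) : theEquiv q = fwdQ q := rfl

/-- In `Q = ℂ[X,Y,Z]/(XY − (XY² − 1)Z)` the class of `XY² − 1` is a unit with inverse the
class of `YZ − 1`, and `Q` is isomorphic, as a `ℂ`-algebra, to the localization of `ℂ[X,Y]`
away from `w = XY² − 1`, via `X ↦ X`, `Y ↦ Y`, `Z ↦ XY·w⁻¹`. -/
theorem chart_iso_localization :
    (Ideal.Quotient.mk chartIdeal' (X 0 * (X 1) ^ 2 - 1) *
        Ideal.Quotient.mk chartIdeal' (X 1 * X 2 - 1) = 1) ∧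
    (Ideal.Quotient.mk chartIdeal' (X 1 * X 2 - 1) *
        Ideal.Quotient.mk chartIdeal' (X 0 * (X 1) ^ 2 - 1) = 1) ∧
    ∃ e : (MvPolynomial (Fin 3) ℂ ⧸ chartIdeal') ≃ₐ[ℂ] Localization.Away wElt,
      e (Ideal.Quotient.mk chartIdeal' (X 0)) =
        algebraMap (MvPolynomial (Fin 2) ℂ) (Localization.Away wElt) (X 0) ∧
      e (Ideal.Quotient.mk chartIdeal' (X 1)) =
        algebraMap (MvPolynomial (Fin 2) ℂ) (Localization.Away wElt) (X 1) ∧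
      e (Ideal.Quotient.mk chartIdeal' (X 2)) =
        algebraMap (MvPolynomial (Fin 2) ℂ) (Localization.Away wElt) (X 0 * X 1) *
          IsLocalization.Away.invSelf (S := Localization.Away wElt) wElt := by
  have hmul : Ideal.Quotient.mk chartIdeal' (X 0 * (X 1) ^ 2 - 1) *
      Ideal.Quotient.mk chartIdeal' (X 1 * X 2 - 1) = 1 := by
    rw [← map_mul, ← map_one (Ideal.Quotient.mk chartIdeal'),
      Ideal.Quotient.mk_eq_mk_iff_sub_mem]
    exact mem1
  refine ⟨hmul, by rw [mul_comm]; exact hmul, theEquiv, ?_, ?_, ?_⟩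
  · rw [theEquiv_apply]
    rw [show fwdQ (Ideal.Quotient.mk chartIdeal' (X 0)) = fwd (X 0) from by rfl]
    simp [fwd]
  · rw [theEquiv_apply]
    rw [show fwdQ (Ideal.Quotient.mk chartIdeal' (X 1)) = fwd (X 1) from by rfl]
    simp [fwd]
  · rw [theEquiv_apply]
    rw [show fwdQ (Ideal.Quotient.mk chartIdeal' (X 2)) = fwd (X 2) from by rfl]
    simp [fwd]
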